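/- Define, for G > 0 and I > 0 (real powers): f₁(G) = 210·G²/(G² + 60000²); f₂(G) = 72·G^{1.8}/(G^{1.8} + 1035^{1.8}); f₃(G) = G/10000; f₄(I) = 40 + 900·I^{1.5}/(I^{1.5} + ((1/11 + 1/20)^{−1}·80)^{1.5}); f₅(I) = 180·I^{−8.54}/(I^{−8.54} + (3·26.7)^{−8.54}); and let d = 0.06. Then for every constant G_in ≥ 0 there exists a unique G* > 0 such that G_in − f₂(G*) − f₃(G*)·f₄(f₁(G*)/d) + f₅(f₁(G*)/d) = 0. Consequently, with I* := f₁(G*)/d, the pair (G*, I*) is the unique equilibrium with positive coordinates of the glucose–insulin system G' = G_in − f₂(G) − f₃(G)f₄(I) + f₅(I(t−τ_G)), I' = f₁(G(t−τ_I)) − dI (at an equilibrium all delayed arguments coincide with the equilibrium values, independently of τ_I, τ_G). -/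

import Mathlib

/-- Insulin production pathway `f₁(G) = R_m G^{h₁}/(G^{h₁} + (V_g k₁)^{h₁})`. -/
noncomputable def f₁ (G : ℝ) : ℝ := 210 * G ^ 2 / (G ^ 2 + 60000 ^ 2)

/-- Insulin-independent glucose utilization `f₂`. -/
noncomputable def f₂ (G : ℝ) : ℝ :=
  72 * G ^ (1.8 : ℝ) / (G ^ (1.8 : ℝ) + (1035 : ℝ) ^ (1.8 : ℝ))

/-- Insulin-dependent glucose utilization factor `f₃(G) = G/(C₃ V_g)`. -/
noncomputable def f₃ (G : ℝ) : ℝ := G / 10000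

/-- Insulin-dependent glucose utilization factor `f₄`. -/
noncomputable def f₄ (I : ℝ) : ℝ :=
  40 + 900 * I ^ (1.5 : ℝ) /
    (I ^ (1.5 : ℝ) + ((1 / 11 + 1 / 20 : ℝ)⁻¹ * 80) ^ (1.5 : ℝ))

/-- Hepatic glucose production `f₅` (Hill exponent `h₅ = −8.54`). -/
noncomputable def f₅ (I : ℝ) : ℝ :=
  180 * I ^ (-8.54 : ℝ) / (I ^ (-8.54 : ℝ) + ((3 : ℝ) * 26.7) ^ (-8.54 : ℝ))

/- ### Auxiliary lemmas -/

private lemma hill_lt {c x y : ℝ} (hc : 0 < c) (hx : 0 ≤ x) (hxy : x < y) :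
    x / (x + c) < y / (y + c) := by
  rw [div_lt_div_iff₀ (by linarith) (by linarith)]
  nlinarith

private lemma hill_nonneg {c x : ℝ} (hc : 0 < c) (hx : 0 ≤ x) : 0 ≤ x / (x + c) :=
  div_nonneg hx (by linarith)

private lemma hill_lt_one {c x : ℝ} (hc : 0 < c) (hx : 0 ≤ x) : x / (x + c) < 1 := by
  rw [div_lt_one (by linarith)]; linarith

private lemma c2_pos : (0:ℝ) < (1035 : ℝ) ^ (1.8 : ℝ) :=
  Real.rpow_pos_of_pos (by norm_num) _

private lemma c4_pos : (0:ℝ) < ((1 / 11 + 1 / 20 : ℝ)⁻¹ * 80) ^ (1.5 : ℝ) :=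
  Real.rpow_pos_of_pos (by norm_num) _

private lemma c5_pos : (0:ℝ) < ((3 : ℝ) * 26.7) ^ (-8.54 : ℝ) :=
  Real.rpow_pos_of_pos (by norm_num) _

private lemma f₁_pos {G : ℝ} (hG : 0 < G) : 0 < f₁ G := by
  unfold f₁; positivity

private lemma f₁_mono {a b : ℝ} (ha : 0 < a) (hab : a < b) : f₁ a < f₁ b := by
  unfold f₁
  have h := hill_lt (c := 60000 ^ 2) (by norm_num) (by positivity)
    (by nlinarith : a ^ 2 < b ^ 2)
  rw [mul_div_assoc, mul_div_assoc]
  nlinarith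

private lemma f₂_nonneg {G : ℝ} (hG : 0 < G) : 0 ≤ f₂ G := by
  unfold f₂
  have := Real.rpow_nonneg hG.le (1.8 : ℝ)
  positivity

private lemma f₂_lt_72 {G : ℝ} (hG : 0 < G) : f₂ G < 72 := by
  unfold f₂
  have hx := Real.rpow_nonneg hG.le (1.8 : ℝ)
  have h := hill_lt_one (c := (1035 : ℝ) ^ (1.8 : ℝ)) c2_pos hx
  rw [mul_div_assoc]
  nlinarith

private lemma f₂_mono {a b : ℝ} (ha : 0 < a) (hab : a < b) : f₂ a < f₂ b := by
  unfold f₂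
  have hx := Real.rpow_nonneg ha.le (1.8 : ℝ)
  have hxy : a ^ (1.8 : ℝ) < b ^ (1.8 : ℝ) := Real.rpow_lt_rpow ha.le hab (by norm_num)
  have h := hill_lt c2_pos hx hxy
  rw [mul_div_assoc, mul_div_assoc]
  nlinarith

private lemma f₄_ge {I : ℝ} (hI : 0 < I) : 40 ≤ f₄ I := by
  unfold f₄
  have hx := Real.rpow_nonneg hI.le (1.5 : ℝ)
  have := hill_nonneg (c := ((1 / 11 + 1 / 20 : ℝ)⁻¹ * 80) ^ (1.5 : ℝ)) c4_pos hx
  rw [mul_div_assoc]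
  nlinarith

private lemma f₄_le {I : ℝ} (hI : 0 < I) : f₄ I ≤ 940 := by
  unfold f₄
  have hx := Real.rpow_nonneg hI.le (1.5 : ℝ)
  have := hill_lt_one (c := ((1 / 11 + 1 / 20 : ℝ)⁻¹ * 80) ^ (1.5 : ℝ)) c4_pos hx
  rw [mul_div_assoc]
  nlinarith

private lemma f₄_mono {a b : ℝ} (ha : 0 < a) (hab : a ≤ b) : f₄ a ≤ f₄ b := by
  rcases eq_or_lt_of_le hab with rfl | hab
  · exact le_rfl
  apply le_of_lt
  unfold f₄
  have hx := Real.rpow_nonneg ha.le (1.5 : ℝ)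
  have hxy : a ^ (1.5 : ℝ) < b ^ (1.5 : ℝ) := Real.rpow_lt_rpow ha.le hab (by norm_num)
  have h := hill_lt c4_pos hx hxy
  rw [mul_div_assoc, mul_div_assoc]
  nlinarith

private lemma f₅_pos {I : ℝ} (hI : 0 < I) : 0 < f₅ I := by
  unfold f₅
  have hy := Real.rpow_pos_of_pos hI (-8.54 : ℝ)
  positivity

private lemma f₅_le {I : ℝ} (hI : 0 < I) : f₅ I ≤ 180 := by
  unfold f₅
  have hy := (Real.rpow_pos_of_pos hI (-8.54 : ℝ)).le
  have := hill_lt_one (c := ((3 : ℝ) * 26.7) ^ (-8.54 : ℝ)) c5_pos hy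
  rw [mul_div_assoc]
  nlinarith

private lemma f₅_anti {a b : ℝ} (ha : 0 < a) (hab : a ≤ b) : f₅ b ≤ f₅ a := by
  rcases eq_or_lt_of_le hab with rfl | hab
  · exact le_rfl
  apply le_of_lt
  unfold f₅
  have hb : 0 < b := lt_trans ha hab
  have hyb := Real.rpow_pos_of_pos hb (-8.54 : ℝ)
  have hxy : b ^ (-8.54 : ℝ) < a ^ (-8.54 : ℝ) :=
    Real.rpow_lt_rpow_of_neg ha hab (by norm_num)
  have h := hill_lt c5_pos hyb.le hxy
  rw [mul_div_assoc, mul_div_assoc]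
  nlinarith

private lemma f₅_gt {I : ℝ} (hI : 0 < I) (hI' : I < 80.1) : 90 < f₅ I := by
  unfold f₅
  have hy := Real.rpow_pos_of_pos hI (-8.54 : ℝ)
  have hc : ((3 : ℝ) * 26.7) ^ (-8.54 : ℝ) < I ^ (-8.54 : ℝ) := by
    have : ((3 : ℝ) * 26.7) = 80.1 := by norm_num
    rw [this]
    exact Real.rpow_lt_rpow_of_neg hI hI' (by norm_num)
  rw [mul_div_assoc]
  rw [show (180 : ℝ) = 180 by rfl]
  have hd : 0 < I ^ (-8.54 : ℝ) + ((3 : ℝ) * 26.7) ^ (-8.54 : ℝ) := by positivity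
  rw [show (90:ℝ) = 180 * (1/2) by norm_num]
  have : (1/2 : ℝ) < I ^ (-8.54 : ℝ) / (I ^ (-8.54 : ℝ) + ((3 : ℝ) * 26.7) ^ (-8.54 : ℝ)) := by
    rw [lt_div_iff₀ hd]; nlinarith
  nlinarith

theorem stmt8 (Gin : ℝ) (hGin : 0 ≤ Gin) :
    (∃! G : ℝ, 0 < G ∧
      Gin - f₂ G - f₃ G * f₄ (f₁ G / 0.06) + f₅ (f₁ G / 0.06) = 0) ∧
    (∃! p : ℝ × ℝ, (0 < p.1 ∧ 0 < p.2) ∧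
      Gin - f₂ p.1 - f₃ p.1 * f₄ p.2 + f₅ p.2 = 0 ∧
      f₁ p.1 - 0.06 * p.2 = 0) := by
  set F : ℝ → ℝ := fun G => Gin - f₂ G - f₃ G * f₄ (f₁ G / 0.06) + f₅ (f₁ G / 0.06)
    with hF
  have hIpos : ∀ {G : ℝ}, 0 < G → 0 < f₁ G / 0.06 := fun hG =>
    div_pos (f₁_pos hG) (by norm_num)
  -- F is strictly decreasing on (0, ∞)
  have hanti : StrictAntiOn F (Set.Ioi (0:ℝ)) := by
    intro a ha b hb hab
    simp only [Set.mem_Ioi] at ha hb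
    have h2 : f₂ a < f₂ b := f₂_mono ha hab
    have hIa := hIpos ha
    have hIb := hIpos hb
    have hI : f₁ a / 0.06 ≤ f₁ b / 0.06 := by
      gcongr
      exact (f₁_mono ha hab).le
    have h34 : f₃ a * f₄ (f₁ a / 0.06) ≤ f₃ b * f₄ (f₁ b / 0.06) := by
      apply mul_le_mul
      · unfold f₃; linarith
      · exact f₄_mono hIa hI
      · linarith [f₄_ge hIa]
      · unfold f₃; linarith
    have h5 : f₅ (f₁ b / 0.06) ≤ f₅ (f₁ a / 0.06) := f₅_anti hIa hI
    simp only [hF]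
    linarith
  -- continuity of F on (0, ∞)
  have hcont : ContinuousOn F (Set.Ioi (0:ℝ)) := by
    have hgc : Continuous fun G : ℝ => f₁ G / 0.06 := by
      unfold f₁
      exact ((continuous_const.mul (continuous_pow 2)).div
        ((continuous_pow 2).add continuous_const) (fun x => ne_of_gt (add_pos_of_nonneg_of_pos (sq_nonneg x) (by norm_num)))).div_const _
    have hmaps : Set.MapsTo (fun G : ℝ => f₁ G / 0.06) (Set.Ioi 0) (Set.Ioi 0) :=
      fun x hx => Set.mem_Ioi.mpr (hIpos (Set.mem_Ioi.mp hx))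
    have h18 : ContinuousOn (fun G : ℝ => G ^ (1.8:ℝ)) (Set.Ioi 0) :=
      continuousOn_id.rpow_const (fun x hx => Or.inl (ne_of_gt (Set.mem_Ioi.mp hx)))
    have h2c : ContinuousOn f₂ (Set.Ioi 0) := by
      unfold f₂
      exact (continuousOn_const.mul h18).div (h18.add continuousOn_const)
        (fun x hx => by
          have := Real.rpow_nonneg (Set.mem_Ioi.mp hx).le (1.8:ℝ)
          have := c2_pos; positivity)
    have h15 : ContinuousOn (fun I : ℝ => I ^ (1.5:ℝ)) (Set.Ioi 0) :=
      continuousOn_id.rpow_const (fun x hx => Or.inl (ne_of_gt (Set.mem_Ioi.mp hx)))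
    have h4c : ContinuousOn f₄ (Set.Ioi 0) := by
      unfold f₄
      exact continuousOn_const.add ((continuousOn_const.mul h15).div
        (h15.add continuousOn_const)
        (fun x hx => by
          have := Real.rpow_nonneg (Set.mem_Ioi.mp hx).le (1.5:ℝ)
          have := c4_pos; positivity))
    have h85 : ContinuousOn (fun I : ℝ => I ^ (-8.54:ℝ)) (Set.Ioi 0) :=
      continuousOn_id.rpow_const (fun x hx => Or.inl (ne_of_gt (Set.mem_Ioi.mp hx)))
    have h5c : ContinuousOn f₅ (Set.Ioi 0) := by
      unfold f₅
      exact (continuousOn_const.mul h85).div (h85.add continuousOn_const)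
        (fun x hx => by
          have := Real.rpow_pos_of_pos (Set.mem_Ioi.mp hx) (-8.54:ℝ)
          have := c5_pos; positivity)
    have h3c : ContinuousOn f₃ (Set.Ioi 0) := by
      unfold f₃; exact (continuous_id.div_const _).continuousOn
    exact ((continuousOn_const.sub h2c).sub
        (h3c.mul (h4c.comp hgc.continuousOn hmaps))).add
      (h5c.comp hgc.continuousOn hmaps)
  -- F 1 > 0
  have hF1 : 0 < F 1 := by
    have hI1 : 0 < f₁ 1 / 0.06 := hIpos one_pos
    have hf11 : f₁ 1 < 1 := by unfold f₁; norm_num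
    have hf11' : 0 < f₁ 1 := f₁_pos one_pos
    have hI1' : f₁ 1 / 0.06 < 80.1 := by
      rw [div_lt_iff₀ (by norm_num)]; nlinarith
    have h5 := f₅_gt hI1 hI1'
    have h2 := f₂_lt_72 one_pos
    have h4 := f₄_le hI1
    have h4' := f₄_ge hI1
    have h3 : f₃ 1 = 1 / 10000 := by unfold f₃; norm_num
    simp only [hF]
    nlinarith
  -- F b ≤ 0 for b = 250 * Gin + 50000
  set b : ℝ := 250 * Gin + 50000 with hb
  have hbpos : (1:ℝ) ≤ b := by linarith
  have hbpos' : (0:ℝ) < b := by linarith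
  have hFb : F b ≤ 0 := by
    have hIb := hIpos hbpos'
    have h2 := f₂_nonneg hbpos'
    have h4 := f₄_ge hIb
    have h5 := f₅_le hIb
    have h3 : f₃ b = b / 10000 := rfl
    have h34 : (b / 10000) * 40 ≤ f₃ b * f₄ (f₁ b / 0.06) := by
      rw [h3]
      apply mul_le_mul_of_nonneg_left h4 (by linarith)
    simp only [hF]
    have : (b / 10000) * 40 = Gin + 200 := by rw [hb]; ring
    linarith
  -- existence of a root by IVT
  obtain ⟨G, hGmem, hFG⟩ : (0:ℝ) ∈ F '' Set.Icc 1 b := by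
    apply intermediate_value_Icc' hbpos (hcont.mono ?_)
    · exact ⟨hFb, hF1.le⟩
    · intro x hx
      exact Set.mem_Ioi.mpr (lt_of_lt_of_le one_pos hx.1)
  have hGpos : 0 < G := lt_of_lt_of_le one_pos hGmem.1
  -- uniqueness
  have huniq : ∀ y : ℝ, 0 < y → F y = 0 → y = G := by
    intro y hy hFy
    exact hanti.injOn (Set.mem_Ioi.mpr hy) (Set.mem_Ioi.mpr hGpos) (hFy.trans hFG.symm)
  constructor
  · exact ⟨G, ⟨hGpos, hFG⟩, fun y hy => huniq y hy.1 hy.2⟩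
  · refine ⟨(G, f₁ G / 0.06), ⟨⟨hGpos, hIpos hGpos⟩, hFG, by field_simp; ring⟩, ?_⟩
    rintro ⟨q1, q2⟩ ⟨⟨hq1, hq2⟩, heq, hlin⟩
    simp only at heq hlin hq1 hq2
    have hq2eq : q2 = f₁ q1 / 0.06 := by
      field_simp; linarith
    have h1 : q1 = G := by
      apply huniq q1 hq1
      simp only [hF]
      rw [← hq2eq]
      exact heq
    subst h1
    simp [hq2eq]
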